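/- Let Λ(Y) = {q ∈ Λ_Y : for all δ > 0 there is a δ-chain joining σ to q}, where σ ∈ Λ_Y is a fixed point. Suppose that for every δ > 0 and every p ∈ Λ(Y) there exist x ∈ B_δ(p) and t > 1 with Y_t(x) ∈ B_δ(σ). Then Λ(Y) is chain-transitive. -/

import Mathlib

open Filter Topology Metric Set

/-- A continuous flow on `M`. -/
def IsFlow {M : Type*} [TopologicalSpace M] (φ : ℝ → M → M) : Prop :=
  Continuous (fun p : ℝ × M => φ p.1 p.2) ∧ (∀ x, φ 0 x = x) ∧
    ∀ s t x, φ (s + t) x = φ s (φ t x)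

/-- The omega-limit set of `x` under the flow `φ`. -/
def omegaLim {M : Type*} [TopologicalSpace M] (φ : ℝ → M → M) (x : M) : Set M :=
  {y | ∃ t : ℕ → ℝ, Tendsto t atTop atTop ∧ Tendsto (fun n => φ (t n) x) atTop (𝓝 y)}

/-- A `δ`-chain of the flow `φ` joining `q` to `p`. -/
def DeltaChain {M : Type*} [MetricSpace M] (φ : ℝ → M → M) (δ : ℝ) (q p : M) : Prop :=
  ∃ (n : ℕ) (qs : Fin (n + 2) → M) (ts : Fin (n + 1) → ℝ),
    qs 0 = q ∧ qs (Fin.last (n + 1)) = p ∧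
    ∀ i : Fin (n + 1), 1 ≤ ts i ∧
      (φ (ts i) '' Metric.ball (qs i.castSucc) δ ∩ Metric.ball (qs i.succ) δ).Nonempty

/-- A compact invariant set is chain-transitive if any two of its points are joined
by `δ`-chains for all `δ > 0`. -/
def ChainTransitive {M : Type*} [MetricSpace M] (φ : ℝ → M → M) (Λ : Set M) : Prop :=
  ∀ p ∈ Λ, ∀ q ∈ Λ, ∀ δ > (0:ℝ), DeltaChain φ δ p q

/-- Lyapunov stability of a compact invariant set. -/
def LyapunovStable {M : Type*} [TopologicalSpace M] (φ : ℝ → M → M) (Λ : Set M) : Prop :=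
  ∀ U : Set M, IsOpen U → Λ ⊆ U →
    ∃ V : Set M, IsOpen V ∧ Λ ⊆ V ∧ V ⊆ U ∧ ∀ t > (0:ℝ), φ t '' V ⊆ U


lemma DeltaChain.cons {M : Type*} [MetricSpace M] (φ : ℝ → M → M) {δ : ℝ} {a b c : M}
    (t : ℝ) (ht : 1 ≤ t) (hstep : (φ t '' Metric.ball a δ ∩ Metric.ball b δ).Nonempty)
    (h : DeltaChain φ δ b c) : DeltaChain φ δ a c := by
  obtain ⟨n, qs, ts, h0, hl, hsteps⟩ := h
  refine ⟨n + 1, Fin.cons a qs, Fin.cons t ts, by simp, ?_, ?_⟩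
  · have : (Fin.last (n + 2)) = (Fin.last (n + 1)).succ := rfl
    rw [this, Fin.cons_succ]; exact hl
  · intro i
    induction i using Fin.cases with
    | zero =>
      refine ⟨by simp [ht], ?_⟩
      have h2 : (0 : Fin (n + 2)).succ = Fin.succ (0 : Fin (n + 2)) := rfl
      rw [h2]
      simpa [h0] using hstep
    | succ j =>
      refine ⟨by simp [(hsteps j).1], ?_⟩
      rw [← Fin.succ_castSucc]
      simpa using (hsteps j).2

/-- the set of points chained from the singularity `σ` is chain-transitive. -/
theorem stmt_9 {M : Type*} [MetricSpace M] [CompactSpace M]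
    (φ : ℝ → M → M) (hφ : IsFlow φ) (ΛY : Set M) (σ : M)
    (hΛc : IsCompact ΛY) (hΛinv : ∀ t : ℝ, φ t '' ΛY = ΛY)
    (hσ : σ ∈ ΛY) (hσfix : ∀ t : ℝ, φ t σ = σ)
    (hyp : ∀ δ > (0:ℝ), ∀ p ∈ {q ∈ ΛY | ∀ δ' > (0:ℝ), DeltaChain φ δ' σ q},
      ∃ x ∈ Metric.ball p δ, ∃ t : ℝ, 1 < t ∧ φ t x ∈ Metric.ball σ δ) :
    ChainTransitive φ {q ∈ ΛY | ∀ δ' > (0:ℝ), DeltaChain φ δ' σ q} := by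
  rintro p ⟨hpΛ, hpc⟩ q ⟨hqΛ, hqc⟩ δ hδ
  obtain ⟨x, hx, t, ht, hxt⟩ := hyp δ hδ p ⟨hpΛ, hpc⟩
  exact DeltaChain.cons φ t ht.le ⟨φ t x, ⟨x, hx, rfl⟩, hxt⟩ (hqc δ hδ)
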